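/- Let M : Fin n → Fin m → Bool and let H be the constraint digraph on Fin n ⊕ Fin m with edges inl i → inl i' for i < i', inr p → inr p' for p < p', inl i → inr p when M i p = true, and inr p → inl j when ∃ i < j, ∃ q > p, M i p = true ∧ M j p = false ∧ M j q = true. If there exists a Stick order for M (strictly monotone ra : Fin n → ℕ, rb : Fin m → ℕ with disjoint ranges such that ∀ j p, M j p = true ↔ (ra j < rb p ∧ (∃ q ≥ p, M j q = true) ∧ (∃ i ≤ j, M i p = true))), then H is acyclic. -/
import Mathlib


def StickOrder {n m : ℕ} (M : Fin n → Fin m → Bool) : Prop :=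
  ∃ (ra : Fin n → ℕ) (rb : Fin m → ℕ),
    StrictMono ra ∧ StrictMono rb ∧ (∀ i p, ra i ≠ rb p) ∧
    ∀ j p, M j p = true ↔
      (ra j < rb p ∧ (∃ q, p ≤ q ∧ M j q = true) ∧ (∃ i, i ≤ j ∧ M i p = true))

def HEdge {n m : ℕ} (M : Fin n → Fin m → Bool) :
    Fin n ⊕ Fin m → Fin n ⊕ Fin m → Prop
  | Sum.inl i, Sum.inl i' => i < i'
  | Sum.inr p, Sum.inr p' => p < p'
  | Sum.inl i, Sum.inr p => M i p = true
  | Sum.inr p, Sum.inl j =>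
      ∃ i, i < j ∧ ∃ q, p < q ∧ M i p = true ∧ M j p = false ∧ M j q = true

def P1 {n m : ℕ} (M : Fin n → Fin m → Bool) : Prop :=
  ∃ i j k : Fin n, i < j ∧ j < k ∧ ∃ p q r : Fin m, p < q ∧ q < r ∧
    M i q = true ∧ M j q = false ∧ M j r = true ∧ M k p = true

def P2 {n m : ℕ} (M : Fin n → Fin m → Bool) : Prop :=
  ∃ i j k : Fin n, i < j ∧ j < k ∧ ∃ p q : Fin m, p < q ∧
    M i p = true ∧ M j p = false ∧ M j q = true ∧ M k p = true

def P3 {n m : ℕ} (M : Fin n → Fin m → Bool) : Prop :=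
  ∃ i j : Fin n, i < j ∧ ∃ p q r : Fin m, p < q ∧ q < r ∧
    M i q = true ∧ M j p = true ∧ M j q = false ∧ M j r = true

theorem stmt_2 {n m : ℕ} (M : Fin n → Fin m → Bool)
    (h : StickOrder M) :
    ¬ ∃ v, Relation.TransGen (HEdge M) v v := by
  obtain ⟨ra, rb, hra, hrb, hne, hM⟩ := h
  set f : Fin n ⊕ Fin m → ℕ := fun v => match v with
    | .inl i => ra i | .inr p => rb p with hf
  have key : ∀ a b, HEdge M a b → f a < f b := by
    rintro (i | p) (j | q) hE
    · exact hra hE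
    · exact ((hM i q).mp hE).1
    · obtain ⟨i, hij, q2, hpq, hip, hjp, hjq⟩ := hE
      rcases lt_or_gt_of_ne ((hne j p).symm) with h1 | h1
      · exact h1
      · exfalso
        have : M j p = true := (hM j p).mpr ⟨h1, ⟨q2, le_of_lt hpq, hjq⟩, ⟨i, le_of_lt hij, hip⟩⟩
        simp [this] at hjp
    · exact hrb hE
  rintro ⟨v, hv⟩
  have : f v < f v := by
    have mono : ∀ a b, Relation.TransGen (HEdge M) a b → f a < f b := by
      intro a b hab
      induction hab with
      | single h => exact key _ _ h
      | tail _ h ih => exact lt_trans ih (key _ _ h)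
    exact mono v v hv
  exact lt_irrefl _ this
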